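/- If T is a bounded totally *-paranormal operator and λ ∈ ℂ, then every eigenvector of T for λ is also an eigenvector of T* for λ̄; that is, ker(T − λI) ⊆ ker(T* − λ̄I). -/

import Mathlib

theorem stmt_3 {H : Type*} [NormedAddCommGroup H] [InnerProductSpace ℂ H]
    [CompleteSpace H] (T : H →L[ℂ] H)
    (hT : ∀ (lam : ℂ) (x : H),
      ‖(ContinuousLinearMap.adjoint (T - lam • 1)) x‖ ^ 2 ≤
        ‖((T - lam • 1) ∘L (T - lam • 1)) x‖ * ‖x‖)
    (lam : ℂ) :
    LinearMap.ker ((T - lam • (1 : H →L[ℂ] H) : H →L[ℂ] H) : H →ₗ[ℂ] H) ≤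
      LinearMap.ker ((ContinuousLinearMap.adjoint T - (starRingEnd ℂ) lam • (1 : H →L[ℂ] H) : H →L[ℂ] H) : H →ₗ[ℂ] H) := by
  intro x hx
  have hx' : (T - lam • 1) x = 0 := hx
  have h := hT lam x
  rw [ContinuousLinearMap.comp_apply, hx', map_zero, norm_zero, zero_mul] at h
  have h0 : ‖(ContinuousLinearMap.adjoint (T - lam • 1)) x‖ = 0 := by
    nlinarith [norm_nonneg ((ContinuousLinearMap.adjoint (T - lam • 1)) x)]
  have h1 : (ContinuousLinearMap.adjoint (T - lam • 1)) x = 0 := by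
    simpa using h0
  have hadj : ContinuousLinearMap.adjoint (T - lam • 1) =
      ContinuousLinearMap.adjoint T - (starRingEnd ℂ) lam • 1 := by
    have hone : ContinuousLinearMap.adjoint (1 : H →L[ℂ] H) = 1 :=
      ContinuousLinearMap.adjoint_id
    rw [map_sub, LinearIsometryEquiv.map_smulₛₗ, hone]
  show (ContinuousLinearMap.adjoint T - (starRingEnd ℂ) lam • 1) x = 0
  rw [← hadj]; exact h1
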